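/- Let S ⊂ 𝔞 be a finite set whose differences span 𝔞, h(u) = ∑_{μ∈S} e^{⟨μ,u⟩}, and δ ∈ 𝔞 with δ in the interior of the convex hull of S. Then the function φ^δ(u) = log h(u) − ⟨δ,u⟩ tends to +∞ as |u| → ∞, is strictly convex, and hence attains its minimum at a unique point s ∈ 𝔞, which is the unique solution of ∇h(s) = δ·h(s). -/

import Mathlib

open scoped RealInnerProductSpace
open Finset Filter

/-- If `S - S` spans `𝔞` and `δ` lies in the interior of the convex hull of `S`, then
`φ^δ(u) = log h(u) - ⟨δ,u⟩` tends to `+∞` at infinity, is strictly convex, and attains its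
minimum at a unique point `s`, which is the unique solution of `∇h(s) = δ·h(s)`. -/
theorem stmt_2 {E : Type*} [NormedAddCommGroup E] [InnerProductSpace ℝ E]
    [FiniteDimensional ℝ E]
    (S : Finset E)
    (hspan : Submodule.span ℝ {x : E | ∃ μ ∈ S, ∃ μ' ∈ S, x = μ - μ'} = ⊤)
    (δ : E) (hδ : δ ∈ interior (convexHull ℝ (S : Set E)))
    (h : E → ℝ) (hh : ∀ u, h u = ∑ μ ∈ S, Real.exp ⟪μ, u⟫)
    (φ : E → ℝ) (hφ : ∀ u, φ u = Real.log (h u) - ⟪δ, u⟫) :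
    Tendsto φ (cocompact E) atTop ∧
    StrictConvexOn ℝ Set.univ φ ∧
    ∃ s : E, (∀ u, φ s ≤ φ u) ∧ gradient h s = h s • δ ∧
      ∀ s' : E, ((∀ u, φ s' ≤ φ u) ∨ gradient h s' = h s' • δ) → s' = s := by
  -- basic facts
  have hSne : S.Nonempty := by
    by_contra hne
    rw [Finset.not_nonempty_iff_eq_empty] at hne
    subst hne
    simp only [Finset.coe_empty, convexHull_empty, interior_empty] at hδ
    exact hδ
  have hpos : ∀ u, 0 < h u := fun u => by
    rw [hh]; exact Finset.sum_pos (fun μ _ => Real.exp_pos _) hSne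
  have hterm : ∀ u, ∀ μ ∈ S, Real.exp ⟪μ, u⟫ ≤ h u := fun u μ hμ => by
    rw [hh]
    exact Finset.single_le_sum (f := fun μ => Real.exp ⟪μ, u⟫)
      (fun ν _ => (Real.exp_pos _).le) hμ
  have hlogb : ∀ u, ∀ μ ∈ S, ⟪μ, u⟫ ≤ Real.log (h u) := fun u μ hμ =>
    (Real.le_log_iff_exp_le (hpos u)).2 (hterm u μ hμ)
  -- coercivity
  obtain ⟨r, hr, hball⟩ : ∃ r > 0, Metric.ball δ r ⊆ convexHull ℝ (S : Set E) := by
    obtain ⟨r, hr, hball⟩ := Metric.isOpen_iff.1 isOpen_interior δ hδ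
    exact ⟨r, hr, hball.trans interior_subset⟩
  have hkey : ∀ u : E, ∃ μ ∈ S, r / 2 * ‖u‖ ≤ ⟪μ, u⟫ - ⟪δ, u⟫ := by
    intro u
    rcases eq_or_ne u 0 with rfl | hu
    · obtain ⟨μ, hμ⟩ := hSne
      exact ⟨μ, hμ, by simp⟩
    · set M := S.sup' hSne fun μ => ⟪μ, u⟫ with hM
      have hhull : ∀ x ∈ convexHull ℝ (S : Set E), ⟪x, u⟫ ≤ M := by
        intro x hx
        have hconv : Convex ℝ {w : E | ⟪w, u⟫ ≤ M} :=
          convex_halfSpace_le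
            ⟨fun a b => inner_add_left a b u, fun c a => real_inner_smul_left a u c⟩ M
        have hsub : (S : Set E) ⊆ {w : E | ⟪w, u⟫ ≤ M} := fun μ hμ =>
          le_sup' (fun μ => ⟪μ, u⟫) hμ
        exact convexHull_min hsub hconv hx
      have hnorm : (0:ℝ) < ‖u‖ := norm_pos_iff.2 hu
      set x := δ + (r / 2 * ‖u‖⁻¹) • u with hx
      have hxball : x ∈ Metric.ball δ r := by
        simp only [hx, Metric.mem_ball, dist_eq_norm, add_sub_cancel_left, norm_smul]
        rw [Real.norm_eq_abs, abs_of_pos (by positivity)]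
        rw [mul_assoc, inv_mul_cancel₀ hnorm.ne', mul_one]
        linarith
      have hxin := hhull x (hball hxball)
      have hxval : ⟪x, u⟫ = ⟪δ, u⟫ + r / 2 * ‖u‖ := by
        rw [hx, inner_add_left, real_inner_smul_left, real_inner_self_eq_norm_sq]
        field_simp
      obtain ⟨μ, hμ, hμeq⟩ := Finset.exists_mem_eq_sup' hSne fun μ => ⟪μ, u⟫
      refine ⟨μ, hμ, ?_⟩
      rw [← hμeq]
      rw [hxval] at hxin
      linarith
  have hlower : ∀ u : E, r / 2 * ‖u‖ ≤ φ u := by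
    intro u
    obtain ⟨μ, hμ, hle⟩ := hkey u
    rw [hφ]
    have := hlogb u μ hμ
    linarith
  have part1 : Tendsto φ (cocompact E) atTop := by
    have h1 : Tendsto (fun u : E => r / 2 * ‖u‖) (cocompact E) atTop :=
      (tendsto_norm_cocompact_atTop).const_mul_atTop (by positivity)
    exact tendsto_atTop_mono hlower h1
  -- strict convexity
  have part2 : StrictConvexOn ℝ Set.univ φ := by
    refine ⟨convex_univ, fun x _ y _ hxy a b ha hb hab => ?_⟩
    have hmain : Real.log (h (a • x + b • y)) <
        a * Real.log (h x) + b * Real.log (h y) := by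
      rw [hh, hh, hh]
      set A := ∑ μ ∈ S, Real.exp ⟪μ, x⟫ with hA
      set B := ∑ μ ∈ S, Real.exp ⟪μ, y⟫ with hB
      have hApos : 0 < A := Finset.sum_pos (fun μ _ => Real.exp_pos _) hSne
      have hBpos : 0 < B := Finset.sum_pos (fun μ _ => Real.exp_pos _) hSne
      set c := fun μ : E => ⟪μ, x⟫ - Real.log A with hc
      set d := fun μ : E => ⟪μ, y⟫ - Real.log B with hd
      have hsum_c : ∑ μ ∈ S, Real.exp (c μ) = 1 := by
        simp only [hc, Real.exp_sub, Real.exp_log hApos]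
        rw [← Finset.sum_div, ← hA, div_self hApos.ne']
      have hsum_d : ∑ μ ∈ S, Real.exp (d μ) = 1 := by
        simp only [hd, Real.exp_sub, Real.exp_log hBpos]
        rw [← Finset.sum_div, ← hB, div_self hBpos.ne']
      have hex : ∃ μ₀ ∈ S, c μ₀ ≠ d μ₀ := by
        by_contra hcon
        push_neg at hcon
        have hzero : ∀ μ ∈ S, ∀ μ' ∈ S, ⟪x - y, μ - μ'⟫ = 0 := by
          intro μ hμ μ' hμ'
          have h1 := hcon μ hμ
          have h2 := hcon μ' hμ'
          simp only [hc, hd] at h1 h2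
          rw [real_inner_comm]
          simp only [inner_sub_left, inner_sub_right]
          linarith
        have hker : Submodule.span ℝ {w : E | ∃ μ ∈ S, ∃ μ' ∈ S, w = μ - μ'} ≤
            LinearMap.ker ((innerSL ℝ (x - y) : E →L[ℝ] ℝ) : E →ₗ[ℝ] ℝ) := by
          rw [Submodule.span_le]
          rintro w ⟨μ, hμ, μ', hμ', rfl⟩
          simp only [SetLike.mem_coe, LinearMap.mem_ker]
          exact hzero μ hμ μ' hμ'
        rw [hspan, top_le_iff] at hker
        have hmem : (innerSL ℝ (x - y) : E →L[ℝ] ℝ) (x - y) = 0 :=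
          LinearMap.mem_ker.1 (hker ▸ (Submodule.mem_top : x - y ∈ (⊤ : Submodule ℝ E)))
        rw [innerSL_apply_apply] at hmem
        exact hxy (sub_eq_zero.1 (inner_self_eq_zero.1 hmem))
      obtain ⟨μ₀, hμ₀, hne₀⟩ := hex
      have key : ∑ μ ∈ S, Real.exp (a * c μ + b * d μ) < 1 := by
        have hlt : ∑ μ ∈ S, Real.exp (a * c μ + b * d μ) <
            ∑ μ ∈ S, (a * Real.exp (c μ) + b * Real.exp (d μ)) := by
          apply Finset.sum_lt_sum
          · intro μ _
            have := convexOn_exp.2 (Set.mem_univ (c μ)) (Set.mem_univ (d μ)) ha.le hb.le hab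
            simpa [smul_eq_mul] using this
          · refine ⟨μ₀, hμ₀, ?_⟩
            have := strictConvexOn_exp.2 (Set.mem_univ (c μ₀)) (Set.mem_univ (d μ₀)) hne₀ ha hb hab
            simpa [smul_eq_mul] using this
        calc ∑ μ ∈ S, Real.exp (a * c μ + b * d μ) < _ := hlt
          _ = 1 := by rw [Finset.sum_add_distrib, ← Finset.mul_sum, ← Finset.mul_sum,
                hsum_c, hsum_d, mul_one, mul_one, hab]
      have hz : ∀ μ : E, ⟪μ, a • x + b • y⟫ = a * ⟪μ, x⟫ + b * ⟪μ, y⟫ := by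
        intro μ
        rw [inner_add_right, real_inner_smul_right, real_inner_smul_right]
      have key2 : ∑ μ ∈ S, Real.exp ⟪μ, a • x + b • y⟫ <
          Real.exp (a * Real.log A + b * Real.log B) := by
        have hrw : ∀ μ : E, Real.exp (a * c μ + b * d μ) =
            Real.exp ⟪μ, a • x + b • y⟫ * Real.exp (-(a * Real.log A + b * Real.log B)) := by
          intro μ
          rw [← Real.exp_add, hz μ]
          congr 1
          simp only [hc, hd]
          ring
        simp only [hrw] at key
        rw [← Finset.sum_mul] at key
        rw [Real.exp_neg] at key
        have hepos : 0 < Real.exp (a * Real.log A + b * Real.log B) := Real.exp_pos _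
        calc ∑ μ ∈ S, Real.exp ⟪μ, a • x + b • y⟫
            = (∑ μ ∈ S, Real.exp ⟪μ, a • x + b • y⟫) *
                (Real.exp (a * Real.log A + b * Real.log B))⁻¹
              * Real.exp (a * Real.log A + b * Real.log B) := by
              field_simp
          _ < 1 * Real.exp (a * Real.log A + b * Real.log B) :=
              mul_lt_mul_of_pos_right key hepos
          _ = _ := one_mul _
      have hzpos : 0 < ∑ μ ∈ S, Real.exp ⟪μ, a • x + b • y⟫ :=
        Finset.sum_pos (fun μ _ => Real.exp_pos _) hSne
      rw [Real.log_lt_iff_lt_exp hzpos]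
      exact key2
    have hδz : ⟪δ, a • x + b • y⟫ = a * ⟪δ, x⟫ + b * ⟪δ, y⟫ := by
      rw [inner_add_right, real_inner_smul_right, real_inner_smul_right]
    rw [hφ, hφ, hφ, smul_eq_mul, smul_eq_mul, hδz]
    linarith
  -- gradient computations
  have hgradh : ∀ u : E, HasGradientAt h (∑ μ ∈ S, Real.exp ⟪μ, u⟫ • μ) u := by
    intro u
    have hfun : h = fun v => ∑ μ ∈ S, Real.exp ⟪μ, v⟫ := funext hh
    rw [hfun, hasGradientAt_iff_hasFDerivAt]
    have H : HasFDerivAt (fun v => ∑ μ ∈ S, Real.exp ⟪μ, v⟫)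
        (∑ μ ∈ S, Real.exp ⟪μ, u⟫ • (innerSL ℝ μ : E →L[ℝ] ℝ)) u := by
      apply HasFDerivAt.fun_sum
      intro μ _
      exact (Real.hasDerivAt_exp ⟪μ, u⟫).comp_hasFDerivAt u (innerSL ℝ μ).hasFDerivAt
    convert H using 1
    · rfl
    ext w
    simp [InnerProductSpace.toDual_apply_apply, sum_inner, real_inner_smul_left]
  have hgradφ : ∀ u : E,
      HasGradientAt φ ((h u)⁻¹ • (∑ μ ∈ S, Real.exp ⟪μ, u⟫ • μ) - δ) u := by
    intro u
    rw [hasGradientAt_iff_hasFDerivAt]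
    have Hlog : HasFDerivAt (fun v => Real.log (h v))
        ((h u)⁻¹ • (∑ μ ∈ S, Real.exp ⟪μ, u⟫ • (innerSL ℝ μ : E →L[ℝ] ℝ))) u := by
      have Hh : HasFDerivAt h
          (∑ μ ∈ S, Real.exp ⟪μ, u⟫ • (innerSL ℝ μ : E →L[ℝ] ℝ)) u := by
        have hfun : h = fun v => ∑ μ ∈ S, Real.exp ⟪μ, v⟫ := funext hh
        rw [hfun]
        apply HasFDerivAt.fun_sum
        intro μ _
        exact (Real.hasDerivAt_exp ⟪μ, u⟫).comp_hasFDerivAt u (innerSL ℝ μ).hasFDerivAt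
      exact (Real.hasDerivAt_log (hpos u).ne').comp_hasFDerivAt u Hh
    have Hinner : HasFDerivAt (fun v : E => ⟪δ, v⟫) (innerSL ℝ δ : E →L[ℝ] ℝ) u :=
      (innerSL ℝ δ).hasFDerivAt
    have Hφ : HasFDerivAt φ
        ((h u)⁻¹ • (∑ μ ∈ S, Real.exp ⟪μ, u⟫ • (innerSL ℝ μ : E →L[ℝ] ℝ)) -
          (innerSL ℝ δ : E →L[ℝ] ℝ)) u := by
      have hfun : φ = fun v => Real.log (h v) - ⟪δ, v⟫ := funext hφ
      rw [hfun]
      exact Hlog.sub Hinner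
    convert Hφ using 1
    · rfl
    ext w
    simp [InnerProductSpace.toDual_apply_apply, sum_inner, inner_sub_left, inner_smul_left,
      real_inner_smul_left]
  -- equivalence between the gradient equation and vanishing gradient of φ
  have hgradeq : ∀ w : E, gradient h w = h w • δ ↔
      (h w)⁻¹ • (∑ μ ∈ S, Real.exp ⟪μ, w⟫ • μ) - δ = 0 := by
    intro w
    rw [(hgradh w).gradient]
    constructor
    · intro he
      rw [he, smul_smul, inv_mul_cancel₀ (hpos w).ne', one_smul, sub_self]
    · intro he
      have h1 : (h w)⁻¹ • (∑ μ ∈ S, Real.exp ⟪μ, w⟫ • μ) = δ := sub_eq_zero.1 he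
      rw [← h1, smul_smul, mul_inv_cancel₀ (hpos w).ne', one_smul]
  -- minimizer implies vanishing gradient
  have hminzero : ∀ w : E, (∀ u, φ w ≤ φ u) →
      (h w)⁻¹ • (∑ μ ∈ S, Real.exp ⟪μ, w⟫ • μ) - δ = 0 := by
    intro w hmin
    have hloc : IsLocalMin φ w := Filter.Eventually.of_forall fun u => hmin u
    have hfd := hloc.fderiv_eq_zero
    rw [(hgradφ w).hasFDerivAt.fderiv] at hfd
    exact (InnerProductSpace.toDual ℝ E).map_eq_zero_iff.1 hfd
  -- vanishing gradient implies minimizer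
  have hzeromin : ∀ w : E,
      ((h w)⁻¹ • (∑ μ ∈ S, Real.exp ⟪μ, w⟫ • μ) - δ = 0) → ∀ u, φ w ≤ φ u := by
    intro w hG u
    set v := u - w with hv
    have hc : ∀ t : ℝ, HasDerivAt (fun t : ℝ => w + t • v) v t := by
      intro t
      simpa using ((hasDerivAt_id t).smul_const v).const_add w
    have hgcomp : ∀ t : ℝ, HasDerivAt (fun t : ℝ => φ (w + t • v))
        ⟪(h (w + t • v))⁻¹ • (∑ μ ∈ S, Real.exp ⟪μ, w + t • v⟫ • μ) - δ, v⟫ t := by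
      intro t
      have H := (hgradφ (w + t • v)).hasFDerivAt.comp_hasDerivAt t (hc t)
      convert H using 1
      · rfl
      · rfl
      · rfl
      rw [InnerProductSpace.toDual_apply_apply]
    have hgconv : ConvexOn ℝ Set.univ (fun t : ℝ => φ (w + t • v)) := by
      have hcomp := (part2.convexOn).comp_affineMap (AffineMap.lineMap w u : ℝ →ᵃ[ℝ] E)
      have heq : (fun t : ℝ => φ (w + t • v)) = φ ∘ (AffineMap.lineMap w u : ℝ →ᵃ[ℝ] E) := by
        funext t
        simp [AffineMap.lineMap_apply, hv, add_comm]
      rw [heq]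
      simpa using hcomp
    have hd0 : HasDerivAt (fun t : ℝ => φ (w + t • v)) 0 0 := by
      have H := hgcomp 0
      simp only [zero_smul, add_zero] at H
      rw [hG] at H
      simpa using H
    have hslope := hgconv.le_slope_of_hasDerivAt (Set.mem_univ (0:ℝ)) (Set.mem_univ (1:ℝ))
      one_pos hd0
    rw [slope_def_field] at hslope
    simp only [one_smul, zero_smul, add_zero, sub_zero, div_one] at hslope
    have : φ w ≤ φ (w + v) := by linarith
    simpa [hv] using this
  -- existence of the minimizer
  have hcont : Continuous φ := by
    have : Differentiable ℝ φ := fun u => (hgradφ u).hasFDerivAt.differentiableAt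
    exact this.continuous
  haveI : Nonempty E := ⟨0⟩
  obtain ⟨s, hs⟩ := hcont.exists_forall_le part1
  refine ⟨part1, part2, s, hs, (hgradeq s).2 (hminzero s hs), ?_⟩
  intro s' hcase
  have hmin' : ∀ u, φ s' ≤ φ u := by
    rcases hcase with hmin | hgrad
    · exact hmin
    · exact hzeromin s' ((hgradeq s').1 hgrad)
  exact part2.eq_of_isMinOn (isMinOn_iff.2 fun u _ => hmin' u)
    (isMinOn_iff.2 fun u _ => hs u) (Set.mem_univ s') (Set.mem_univ s)
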